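/- (Polynomial bound on the sum of gradient-step iterate norms) Consider the distributed proximal-gradient iterates x_i^(k), y_i^(k), q_i^(k), q̂_i^(k) for agents i = 1,…,m as defined in the context. Then there exist scalars C_q, C_q', C_q'' such that for every k ≥ 2: Σ_{i=1}^m ‖q_i^(k)‖ ≤ C_q + C_q'·k + C_q''·k². -/

import Mathlib

open RealInnerProductSpace

private lemma wnorm_le {d m : ℕ} (w : Fin m → ℝ) (v : Fin m → EuclideanSpace ℝ (Fin d)) :
    ‖∑ j, w j • v j‖ ≤ ∑ j, |w j| * ‖v j‖ := by
  refine (norm_sum_le _ _).trans (Finset.sum_le_sum fun j _ => ?_)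
  rw [norm_smul, Real.norm_eq_abs]

set_option maxHeartbeats 2000000 in
/-- Polynomial bound on the sum of gradient-step iterate norms. -/
theorem sum_q_polynomial_bound {d m : ℕ} (hm : 1 ≤ m)
    (α L Gg Gh Γ γ : ℝ)
    (hα : 0 < α) (hL : 0 < L) (hGg : 0 < Gg) (hGh : 0 < Gh) (hΓ : 0 < Γ)
    (hγ0 : 0 < γ) (hγ1 : γ < 1)
    -- the differentiable local objectives and their gradients
    (g : Fin m → EuclideanSpace ℝ (Fin d) → ℝ)
    (g' : Fin m → EuclideanSpace ℝ (Fin d) → EuclideanSpace ℝ (Fin d))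
    (hgconv : ∀ i, ConvexOn ℝ Set.univ (g i))
    (hgrad : ∀ i z, HasGradientAt (g i) (g' i z) z)
    (hLip : ∀ i z w, ‖g' i z - g' i w‖ ≤ L * ‖z - w‖)
    (hGgrad : ∀ i z, ‖g' i z‖ ≤ Gg)
    -- the common nondifferentiable objective, with bounded subgradients
    (h : EuclideanSpace ℝ (Fin d) → ℝ)
    (hhconv : ConvexOn ℝ Set.univ h)
    (hsub : ∀ x z : EuclideanSpace ℝ (Fin d),
      (∀ u, h x + ⟪z, u - x⟫ ≤ h u) → ‖z‖ ≤ Gh)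
    -- the consensus weight matrices
    (lam : ℕ → Fin m → Fin m → ℝ)
    (hlam_nonneg : ∀ k, 1 ≤ k → ∀ i j, 0 ≤ lam k i j)
    (hlam_row : ∀ k, 1 ≤ k → ∀ i, ∑ j, lam k i j = 1)
    (hlam_col : ∀ k, 1 ≤ k → ∀ j, ∑ i, lam k i j = 1)
    (hlam_close : ∀ k, 1 ≤ k → ∀ i j, |lam k i j - 1 / m| ≤ Γ * γ ^ k)
    -- the iterates
    (x y q qhat : ℕ → Fin m → EuclideanSpace ℝ (Fin d))
    (hq : ∀ k, 1 ≤ k → ∀ i, q k i = y (k - 1) i - α • g' i (y (k - 1) i))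
    (hqhat : ∀ k, 1 ≤ k → ∀ i, qhat k i = ∑ j, lam k i j • q k j)
    (hx : ∀ k, 1 ≤ k → ∀ i, ∀ z : EuclideanSpace ℝ (Fin d),
      h (x k i) + (1 / (2 * α)) * ‖x k i - qhat k i‖ ^ 2 ≤
        h z + (1 / (2 * α)) * ‖z - qhat k i‖ ^ 2)
    (hy : ∀ k, 1 ≤ k → ∀ i,
      y k i = x k i + (((k : ℝ) - 1) / ((k : ℝ) + 2)) • (x k i - x (k - 1) i))
    :
    ∃ Cq Cq' Cq'' : ℝ, ∀ k, 2 ≤ k →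
      ∑ i, ‖q k i‖ ≤ Cq + Cq' * k + Cq'' * (k : ℝ) ^ 2 := by
  have hm' : (0:ℝ) < m := by exact_mod_cast hm
  -- the sums we track
  set SY : ℕ → ℝ := fun k => ∑ i, ‖y k i‖ with hSYdef
  set SD : ℕ → ℝ := fun k => ∑ i, ‖x k i - x (k-1) i‖ with hSDdef
  have hSYnn : ∀ k, 0 ≤ SY k := fun k => Finset.sum_nonneg fun i _ => norm_nonneg _
  have hSDnn : ∀ k, 0 ≤ SD k := fun k => Finset.sum_nonneg fun i _ => norm_nonneg _
  -- the additive constant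
  set c0 : ℝ := m*α*(Gg + 3*Gh) + 2*m^2*Γ*α*Gg with hc0def
  have hc0 : 0 < c0 := by positivity
  have hmc : (m:ℝ)*(α*Gh) + m*(α*Gg) ≤ c0 := by
    have he : c0 - ((m:ℝ)*(α*Gh) + m*(α*Gg)) = m*α*(2*Gh) + 2*m^2*Γ*α*Gg := by
      rw [hc0def]; ring
    have hnn : (0:ℝ) ≤ (m:ℝ)*α*(2*Gh) + 2*m^2*Γ*α*Gg := by positivity
    linarith
  -- Step 1: the prox step moves by at most α*Gh
  have hprox : ∀ k, 1 ≤ k → ∀ i, ‖x k i - qhat k i‖ ≤ α * Gh := by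
    intro k hk i
    set X := x k i with hXdef
    set p := qhat k i with hpdef
    have hX : ∀ z : EuclideanSpace ℝ (Fin d),
        h X + (1 / (2 * α)) * ‖X - p‖ ^ 2 ≤ h z + (1 / (2 * α)) * ‖z - p‖ ^ 2 := hx k hk i
    have key : ∀ u, h X + ⟪α⁻¹ • (p - X), u - X⟫ ≤ h u := by
      intro u
      have hgrow : ∀ t : ℝ, 0 < t → t ≤ 1 →
          h X - h u ≤ α⁻¹ * ⟪X - p, u - X⟫ + t * (‖u - X‖ ^ 2 / (2 * α)) := by
        intro t ht0 ht1
        have hcv : h (X + t • (u - X)) ≤ (1 - t) * h X + t * h u := by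
          have := hhconv.2 (Set.mem_univ X) (Set.mem_univ u)
            (by linarith : (0:ℝ) ≤ 1 - t) (le_of_lt ht0) (by ring)
          have he : (1 - t) • X + t • u = X + t • (u - X) := by
            rw [smul_sub, sub_smul, one_smul]; abel
          rwa [he] at this
        have hx1 := hX (X + t • (u - X))
        have hnorm : ‖X + t • (u - X) - p‖ ^ 2
            = ‖X - p‖ ^ 2 + 2 * (t * ⟪X - p, u - X⟫) + t ^ 2 * ‖u - X‖ ^ 2 := by
          have he : X + t • (u - X) - p = (X - p) + t • (u - X) := by abel
          rw [he, norm_add_sq_real, real_inner_smul_right, norm_smul]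
          rw [Real.norm_eq_abs, abs_of_pos ht0]
          ring
        rw [hnorm] at hx1
        have key2 : t * (h X - h u) ≤ t * (α⁻¹ * ⟪X - p, u - X⟫ + t * (‖u - X‖ ^ 2 / (2 * α))) := by
          have he : t * (α⁻¹ * ⟪X - p, u - X⟫ + t * (‖u - X‖ ^ 2 / (2 * α)))
              = 1 / (2 * α) * (2 * (t * ⟪X - p, u - X⟫)) + 1 / (2 * α) * (t ^ 2 * ‖u - X‖ ^ 2) := by
            field_simp
          rw [he]
          nlinarith [hx1, hcv]
        exact (mul_le_mul_iff_right₀ ht0).mp key2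
      have hlim : h X - h u ≤ α⁻¹ * ⟪X - p, u - X⟫ := by
        apply le_of_forall_pos_le_add
        intro ε hε
        set n := ‖u - X‖ ^ 2 with hn
        have hn0 : 0 ≤ n := by positivity
        set t := min 1 (ε * (2 * α) / (n + 1)) with htdef
        have ht0 : 0 < t := by
          apply lt_min one_pos
          positivity
        have ht1 : t ≤ 1 := min_le_left _ _
        have := hgrow t ht0 ht1
        have htb : t * (n / (2 * α)) ≤ ε := by
          have h2 : t ≤ ε * (2 * α) / (n + 1) := min_le_right _ _
          have h2α : (0:ℝ) < 2 * α := by linarith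
          calc t * (n / (2 * α)) ≤ (ε * (2 * α) / (n + 1)) * (n / (2 * α)) :=
                mul_le_mul_of_nonneg_right h2 (by positivity)
            _ = ε * (n / (n + 1)) := by field_simp
            _ ≤ ε * 1 := by
                apply mul_le_mul_of_nonneg_left _ (le_of_lt hε)
                rw [div_le_one (by linarith)]; linarith
            _ = ε := mul_one ε
        linarith
      have hip : ⟪α⁻¹ • (p - X), u - X⟫ = -(α⁻¹ * ⟪X - p, u - X⟫) := by
        rw [real_inner_smul_left]
        have : (p - X) = -(X - p) := by abel
        rw [this, inner_neg_left]; ring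
      rw [hip]; linarith
    have := hsub X _ key
    rw [norm_smul, Real.norm_eq_abs, abs_of_pos (inv_pos.mpr hα)] at this
    have h1 : ‖p - X‖ ≤ α * Gh := by
      rw [inv_mul_le_iff₀ hα] at this
      exact this
    calc ‖X - p‖ = ‖p - X‖ := by rw [norm_sub_rev]
      _ ≤ α * Gh := h1
  -- Step 2: per-agent bound on q
  have hqb : ∀ k, 1 ≤ k → ∀ j, ‖q k j‖ ≤ ‖y (k-1) j‖ + α * Gg := by
    intro k hk j
    rw [hq k hk j]
    refine (norm_sub_le _ _).trans (add_le_add_right ?_ _)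
    rw [norm_smul, Real.norm_eq_abs, abs_of_pos hα]
    exact mul_le_mul_of_nonneg_left (hGgrad j _) hα.le
  have hSQ : ∀ k, 1 ≤ k → ∑ j, ‖q k j‖ ≤ SY (k-1) + m * (α * Gg) := by
    intro k hk
    calc ∑ j, ‖q k j‖ ≤ ∑ j, (‖y (k-1) j‖ + α * Gg) :=
          Finset.sum_le_sum fun j _ => hqb k hk j
      _ = SY (k-1) + m * (α * Gg) := by
          rw [Finset.sum_add_distrib, Finset.sum_const, Finset.card_univ, Fintype.card_fin,
            nsmul_eq_mul]
  -- Step 3: theta coefficients are at most 1 in absolute value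
  have htheta : ∀ k : ℕ, |(((k:ℝ) - 1) / ((k:ℝ) + 2))| ≤ 1 := by
    intro k
    have hk0 : (0:ℝ) ≤ k := Nat.cast_nonneg k
    rw [abs_div, div_le_one (by rw [abs_of_pos]; linarith; linarith)]
    rw [abs_of_pos (by linarith : (0:ℝ) < (k:ℝ) + 2)]
    rcases le_or_gt 1 ((k:ℝ)) with h1 | h1
    · rw [abs_of_nonneg (by linarith)]; linarith
    · rw [abs_of_nonpos (by linarith)]; linarith
  -- Step 4: SY recursion
  have hYrec : ∀ k, 1 ≤ k → SY k ≤ SY (k-1) + c0 + SD k := by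
    intro k hk
    have hstep : ∀ i, ‖y k i‖ ≤ ‖x k i‖ + ‖x k i - x (k-1) i‖ := by
      intro i
      rw [hy k hk i]
      refine (norm_add_le _ _).trans (add_le_add_right ?_ _)
      rw [norm_smul, Real.norm_eq_abs]
      exact mul_le_of_le_one_left (norm_nonneg _) (htheta k)
    have hX : ∀ i, ‖x k i‖ ≤ ‖qhat k i‖ + α * Gh := by
      intro i
      calc ‖x k i‖ = ‖(x k i - qhat k i) + qhat k i‖ := by rw [sub_add_cancel]
        _ ≤ ‖x k i - qhat k i‖ + ‖qhat k i‖ := norm_add_le _ _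
        _ ≤ α * Gh + ‖qhat k i‖ := add_le_add_left (hprox k hk i) _
        _ = ‖qhat k i‖ + α * Gh := by ring
    have hqhatb : ∑ i, ‖qhat k i‖ ≤ ∑ j, ‖q k j‖ := by
      calc ∑ i, ‖qhat k i‖ ≤ ∑ i, ∑ j, lam k i j * ‖q k j‖ := by
            refine Finset.sum_le_sum fun i _ => ?_
            rw [hqhat k hk i]
            refine (wnorm_le _ _).trans (le_of_eq (Finset.sum_congr rfl fun j _ => ?_))
            rw [abs_of_nonneg (hlam_nonneg k hk i j)]
        _ = ∑ j, (∑ i, lam k i j) * ‖q k j‖ := by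
            rw [Finset.sum_comm]
            exact Finset.sum_congr rfl fun j _ => (Finset.sum_mul _ _ _).symm
        _ = ∑ j, ‖q k j‖ := by
            refine Finset.sum_congr rfl fun j _ => ?_
            rw [hlam_col k hk j, one_mul]
    have h1 : SY k ≤ (∑ i, ‖x k i‖) + SD k := by
      calc SY k ≤ ∑ i, (‖x k i‖ + ‖x k i - x (k-1) i‖) := Finset.sum_le_sum fun i _ => hstep i
        _ = (∑ i, ‖x k i‖) + SD k := Finset.sum_add_distrib
    have h2 : ∑ i, ‖x k i‖ ≤ (∑ i, ‖qhat k i‖) + m * (α * Gh) := by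
      calc ∑ i, ‖x k i‖ ≤ ∑ i, (‖qhat k i‖ + α * Gh) := Finset.sum_le_sum fun i _ => hX i
        _ = (∑ i, ‖qhat k i‖) + m * (α * Gh) := by
            rw [Finset.sum_add_distrib, Finset.sum_const, Finset.card_univ, Fintype.card_fin,
              nsmul_eq_mul]
    have h3 := hSQ k hk
    linarith
  -- Step 5: SD recursion
  have hDrec : ∀ k, 2 ≤ k → SD k ≤ SD (k-1) + (2*(m:ℝ)*Γ) * γ^(k-1) * SY (k-2) + c0 := by
    intro k hk
    have hk1 : 1 ≤ k := by omega
    have hk1' : 1 ≤ k - 1 := by omega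
    have hsub11 : k - 1 - 1 = k - 2 := by omega
    set Sp : ℝ := 2*Γ*γ^(k-1) * (SY (k-2) + m*(α*Gg)) + 2*(α*Gh) with hSpdef
    -- spread bound at time k-1
    have hspread : ∀ i j : Fin m, ‖x (k-1) j - x (k-1) i‖ ≤ Sp := by
      intro i j
      have hdij : ‖qhat (k-1) j - qhat (k-1) i‖ ≤ 2*Γ*γ^(k-1) * (∑ t, ‖q (k-1) t‖) := by
        rw [hqhat (k-1) hk1' i, hqhat (k-1) hk1' j, ← Finset.sum_sub_distrib]
        have he : ∀ t : Fin m, lam (k-1) j t • q (k-1) t - lam (k-1) i t • q (k-1) t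
            = (lam (k-1) j t - lam (k-1) i t) • q (k-1) t := fun t => (sub_smul _ _ _).symm
        simp_rw [he]
        refine (wnorm_le _ _).trans ?_
        rw [Finset.mul_sum]
        refine Finset.sum_le_sum fun t _ => ?_
        have h1 : |lam (k-1) j t - lam (k-1) i t| ≤ 2*Γ*γ^(k-1) := by
          have ha := hlam_close (k-1) hk1' j t
          have hb := hlam_close (k-1) hk1' i t
          calc |lam (k-1) j t - lam (k-1) i t|
              ≤ |lam (k-1) j t - 1/m| + |1/m - lam (k-1) i t| := abs_sub_le _ _ _
            _ = |lam (k-1) j t - 1/m| + |lam (k-1) i t - 1/m| := by rw [abs_sub_comm (1/(m:ℝ))]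
            _ ≤ Γ*γ^(k-1) + Γ*γ^(k-1) := add_le_add ha hb
            _ = 2*Γ*γ^(k-1) := by ring
        exact mul_le_mul_of_nonneg_right h1 (norm_nonneg _)
      have hSQ1 : ∑ t, ‖q (k-1) t‖ ≤ SY (k-2) + m*(α*Gg) := by
        have := hSQ (k-1) hk1'
        rwa [hsub11] at this
      have hxi := hprox (k-1) hk1' i
      have hxj := hprox (k-1) hk1' j
      have hcoef : (0:ℝ) ≤ 2*Γ*γ^(k-1) := by positivity
      have h2 : ‖qhat (k-1) j - qhat (k-1) i‖ ≤ 2*Γ*γ^(k-1) * (SY (k-2) + m*(α*Gg)) :=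
        hdij.trans (mul_le_mul_of_nonneg_left hSQ1 hcoef)
      calc ‖x (k-1) j - x (k-1) i‖
          = ‖(x (k-1) j - qhat (k-1) j) + (qhat (k-1) j - qhat (k-1) i)
              + (qhat (k-1) i - x (k-1) i)‖ := by congr 1; abel
        _ ≤ ‖x (k-1) j - qhat (k-1) j‖ + ‖qhat (k-1) j - qhat (k-1) i‖
              + ‖qhat (k-1) i - x (k-1) i‖ := norm_add₃_le
        _ ≤ Sp := by
            rw [norm_sub_rev (qhat (k-1) i)]
            rw [hSpdef]; linarith
    -- per-agent decomposition at time k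
    have hdecomp : ∀ i, ‖x k i - x (k-1) i‖ ≤
        α*Gh + α*Gg + Sp + ∑ j, lam k i j * ‖x (k-1) j - x (k-2) j‖ := by
      intro i
      have hrow := hlam_row k hk1 i
      have e1 : x k i - x (k-1) i = (x k i - qhat k i)
          + (∑ j, lam k i j • (q k j - y (k-1) j))
          + (∑ j, lam k i j • (y (k-1) j - x (k-1) j))
          + (∑ j, lam k i j • (x (k-1) j - x (k-1) i)) := by
        simp only [smul_sub, Finset.sum_sub_distrib]
        rw [hqhat k hk1 i, ← Finset.sum_smul, hrow, one_smul]
        abel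
      have hb2 : ‖∑ j, lam k i j • (q k j - y (k-1) j)‖ ≤ α * Gg := by
        refine (wnorm_le _ _).trans ?_
        have hjb : ∀ j : Fin m, |lam k i j| * ‖q k j - y (k-1) j‖ ≤ lam k i j * (α * Gg) := by
          intro j
          rw [abs_of_nonneg (hlam_nonneg k hk1 i j)]
          refine mul_le_mul_of_nonneg_left ?_ (hlam_nonneg k hk1 i j)
          rw [hq k hk1 j]
          have : y (k-1) j - α • g' j (y (k-1) j) - y (k-1) j = -(α • g' j (y (k-1) j)) := by abel
          rw [this, norm_neg, norm_smul, Real.norm_eq_abs, abs_of_pos hα]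
          exact mul_le_mul_of_nonneg_left (hGgrad j _) hα.le
        calc ∑ j, |lam k i j| * ‖q k j - y (k-1) j‖ ≤ ∑ j, lam k i j * (α * Gg) :=
              Finset.sum_le_sum fun j _ => hjb j
          _ = α * Gg := by rw [← Finset.sum_mul, hrow, one_mul]
      have hb3 : ‖∑ j, lam k i j • (y (k-1) j - x (k-1) j)‖ ≤
          ∑ j, lam k i j * ‖x (k-1) j - x (k-2) j‖ := by
        refine (wnorm_le _ _).trans (Finset.sum_le_sum fun j _ => ?_)
        rw [abs_of_nonneg (hlam_nonneg k hk1 i j)]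
        refine mul_le_mul_of_nonneg_left ?_ (hlam_nonneg k hk1 i j)
        have hyj := hy (k-1) hk1' j
        have : y (k-1) j - x (k-1) j
            = ((((k-1:ℕ):ℝ) - 1) / (((k-1:ℕ):ℝ) + 2)) • (x (k-1) j - x (k-1-1) j) := by
          rw [hyj]; abel
        rw [this, hsub11, norm_smul, Real.norm_eq_abs]
        exact mul_le_of_le_one_left (norm_nonneg _) (htheta (k-1))
      have hb4 : ‖∑ j, lam k i j • (x (k-1) j - x (k-1) i)‖ ≤ Sp := by
        refine (wnorm_le _ _).trans ?_
        have : ∀ j : Fin m, |lam k i j| * ‖x (k-1) j - x (k-1) i‖ ≤ lam k i j * Sp := by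
          intro j
          rw [abs_of_nonneg (hlam_nonneg k hk1 i j)]
          exact mul_le_mul_of_nonneg_left (hspread i j) (hlam_nonneg k hk1 i j)
        calc ∑ j, |lam k i j| * ‖x (k-1) j - x (k-1) i‖ ≤ ∑ j, lam k i j * Sp :=
              Finset.sum_le_sum fun j _ => this j
          _ = Sp := by rw [← Finset.sum_mul, hrow, one_mul]
      calc ‖x k i - x (k-1) i‖
          ≤ ‖x k i - qhat k i‖ + ‖∑ j, lam k i j • (q k j - y (k-1) j)‖
            + ‖∑ j, lam k i j • (y (k-1) j - x (k-1) j)‖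
            + ‖∑ j, lam k i j • (x (k-1) j - x (k-1) i)‖ := by
            rw [e1]
            exact (norm_add_le _ _).trans (add_le_add_left norm_add₃_le _)
        _ ≤ α*Gh + α*Gg + Sp + ∑ j, lam k i j * ‖x (k-1) j - x (k-2) j‖ := by
            have := hprox k hk1 i
            -- reorder: goal has + Sp before the sum; our bounds: hb4 ≤ Sp, hb3 ≤ sum
            linarith [hb2, hb3, hb4]
    -- sum over agents
    have hsum1 : ∑ i, ∑ j, lam k i j * ‖x (k-1) j - x (k-2) j‖ = SD (k-1) := by
      rw [Finset.sum_comm]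
      have : ∀ j : Fin m, ∑ i, lam k i j * ‖x (k-1) j - x (k-2) j‖
          = ‖x (k-1) j - x (k-2) j‖ := by
        intro j
        rw [← Finset.sum_mul, hlam_col k hk1 j, one_mul]
      rw [Finset.sum_congr rfl fun j _ => this j]
      simp only [hSDdef]
      rw [hsub11]
    have hγpow : γ^(k-1) ≤ 1 := pow_le_one₀ hγ0.le hγ1.le
    have hγpownn : (0:ℝ) ≤ γ^(k-1) := by positivity
    calc SD k ≤ ∑ i : Fin m, (α*Gh + α*Gg + Sp + ∑ j, lam k i j * ‖x (k-1) j - x (k-2) j‖) :=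
          Finset.sum_le_sum fun i _ => hdecomp i
      _ = (m:ℝ) * (α*Gh + α*Gg + Sp) + SD (k-1) := by
          rw [Finset.sum_add_distrib, Finset.sum_const, Finset.card_univ, Fintype.card_fin,
            nsmul_eq_mul, hsum1]
      _ ≤ SD (k-1) + (2*(m:ℝ)*Γ) * γ^(k-1) * SY (k-2) + c0 := by
          rw [hSpdef, hc0def]
          have hSYk2 := hSYnn (k-2)
          nlinarith [mul_le_of_le_one_right (by positivity : (0:ℝ) ≤ 2*(m:ℝ)^2*Γ*(α*Gg)) hγpow]
  -- geometric domination constants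
  set β : ℝ := (1+γ)/2 with hβdef
  have hβ0 : 0 < β := by rw [hβdef]; linarith
  have hβ1 : β < 1 := by rw [hβdef]; linarith
  have hγβ : γ < β := by rw [hβdef]; linarith
  have h1β : (0:ℝ) < 1 - β := by linarith
  have hr1 : γ / β < 1 := (div_lt_one hβ0).mpr hγβ
  have hr0 : (0:ℝ) ≤ γ / β := by positivity
  obtain ⟨M, hM⟩ : ∃ M : ℝ, ∀ n : ℕ, (n:ℝ)^2 * (γ/β)^n ≤ M := by
    have ht := tendsto_pow_const_mul_const_pow_of_lt_one 2 hr0 hr1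
    obtain ⟨M, hM⟩ := ht.bddAbove_range
    exact ⟨M, fun n => hM (Set.mem_range_self n)⟩
  have hM0 : 0 ≤ M := by simpa using hM 0
  have hMb : ∀ n : ℕ, γ^n * (n:ℝ)^2 ≤ M * β^n := by
    intro n
    have h2 : ((γ/β)^n) * β^n = γ^n := by
      rw [div_pow]; field_simp
    calc γ^n * (n:ℝ)^2 = ((n:ℝ)^2 * (γ/β)^n) * β^n := by rw [← h2]; ring
      _ ≤ M * β^n := mul_le_mul_of_nonneg_right (hM n) (by positivity)
  obtain ⟨k0, hk0⟩ : ∃ k0 : ℕ, (2*(m:ℝ)*Γ*M) * β^k0 / (1-β) ≤ 1/2 := by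
    obtain ⟨k0, hk0⟩ := exists_pow_lt_of_lt_one
      (show (0:ℝ) < (1-β)/(4*(m:ℝ)*Γ*M+1) by positivity) hβ1
    refine ⟨k0, ?_⟩
    rw [div_le_iff₀ h1β]
    have hcoef : (0:ℝ) ≤ 2*(m:ℝ)*Γ*M := by positivity
    have h4 : (0:ℝ) < 4*(m:ℝ)*Γ*M+1 := by positivity
    calc (2*(m:ℝ)*Γ*M) * β^k0 ≤ (2*(m:ℝ)*Γ*M) * ((1-β)/(4*(m:ℝ)*Γ*M+1)) :=
          mul_le_mul_of_nonneg_left hk0.le hcoef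
      _ = ((2*(m:ℝ)*Γ*M)*(1-β))/(4*(m:ℝ)*Γ*M+1) := by ring
      _ ≤ 1/2 * (1-β) := by
          rw [div_le_iff₀ h4]
          have hid : 1/2*(1-β)*(4*(m:ℝ)*Γ*M+1) - (2*(m:ℝ)*Γ*M)*(1-β) = (1-β)/2 := by ring
          linarith
  -- base constants
  set E : ℝ := ∑ j ∈ Finset.range (k0+3), SD j with hEdef
  set P : ℝ := (∑ j ∈ Finset.range (k0+3), SY j) + 2*(c0 + E) + c0 with hPdef
  have hEnn : 0 ≤ E := Finset.sum_nonneg fun j _ => hSDnn j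
  have hE_ge : ∀ j, j < k0+3 → SD j ≤ E := fun j hj =>
    Finset.single_le_sum (fun l _ => hSDnn l) (Finset.mem_range.mpr hj)
  have hSYsum_nn : 0 ≤ ∑ j ∈ Finset.range (k0+3), SY j :=
    Finset.sum_nonneg fun j _ => hSYnn j
  have hP_ge : ∀ j, j < k0+3 → SY j ≤ P := by
    intro j hj
    have h1 : SY j ≤ ∑ l ∈ Finset.range (k0+3), SY l :=
      Finset.single_le_sum (fun l _ => hSYnn l) (Finset.mem_range.mpr hj)
    rw [hPdef]; linarith
  have hPpos : 0 < P := by rw [hPdef]; linarith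
  have hPc0 : c0 ≤ P := by rw [hPdef]; linarith
  have hPcE : 2*(c0 + E) ≤ P := by rw [hPdef]; linarith
  set F : ℝ := (2*(m:ℝ)*Γ*M*P/(1-β)) * β^k0 with hFdef
  have hF0 : 0 ≤ F := by
    apply mul_nonneg (div_nonneg (by positivity) h1β.le) (by positivity)
  have hFP : F ≤ P/2 := by
    have he : F = P * ((2*(m:ℝ)*Γ*M) * β^k0 / (1-β)) := by rw [hFdef]; ring
    rw [he]
    calc P * ((2*(m:ℝ)*Γ*M) * β^k0 / (1-β)) ≤ P * (1/2) :=
          mul_le_mul_of_nonneg_left hk0 hPpos.le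
      _ = P/2 := by ring
  -- main induction
  have main : ∀ k : ℕ, SY k ≤ P * ((k:ℝ)+1)^2 ∧
      (k0 ≤ k → SD k ≤ E + c0 * k + F * (1 - β^(k - k0))) := by
    intro k
    induction k using Nat.strong_induction_on with
    | _ k ih =>
      by_cases hsmall : k < k0 + 3
      · constructor
        · have h1 : SY k ≤ P := hP_ge k hsmall
          have h2 : P ≤ P * ((k:ℝ)+1)^2 := by
            have a1 : 0 ≤ P*(k:ℝ) := by positivity
            have a2 : 0 ≤ P*(k:ℝ)^2 := by positivity
            have hid : P * ((k:ℝ)+1)^2 = P*(k:ℝ)^2 + 2*(P*(k:ℝ)) + P := by ring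
            linarith
          linarith
        · intro hk0k
          have h1 : SD k ≤ E := hE_ge k hsmall
          have h2 : 0 ≤ F * (1 - β^(k-k0)) := mul_nonneg hF0 (by
            have := pow_le_one₀ hβ0.le hβ1.le (n := k-k0); linarith)
          have h3 : 0 ≤ c0 * (k:ℝ) := by positivity
          linarith
      · push_neg at hsmall
        have hk2 : 2 ≤ k := by omega
        have hcast1 : ((k-1:ℕ):ℝ) = (k:ℝ) - 1 := by
          rw [Nat.cast_sub (by omega : 1 ≤ k), Nat.cast_one]
        have hcast2 : ((k-2:ℕ):ℝ) = (k:ℝ) - 2 := by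
          rw [Nat.cast_sub (by omega : 2 ≤ k)]; norm_num
        have hD : SD k ≤ E + c0 * k + F * (1 - β^(k - k0)) := by
          have ih1 := (ih (k-1) (by omega)).2 (by omega)
          rw [hcast1] at ih1
          have ih2 := (ih (k-2) (by omega)).1
          have hrec := hDrec k hk2
          have hterm : (2*(m:ℝ)*Γ) * γ^(k-1) * SY (k-2) ≤ (2*(m:ℝ)*Γ*M*P) * β^(k-1) := by
            have hb1 : SY (k-2) ≤ P * ((k:ℝ)-1)^2 := by
              rw [hcast2] at ih2
              calc SY (k-2) ≤ P * (((k:ℝ)-2)+1)^2 := ih2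
                _ = P * ((k:ℝ)-1)^2 := by ring
            have hb2 : γ^(k-1) * ((k:ℝ)-1)^2 ≤ M * β^(k-1) := by
              have := hMb (k-1)
              rwa [hcast1] at this
            calc (2*(m:ℝ)*Γ) * γ^(k-1) * SY (k-2)
                ≤ (2*(m:ℝ)*Γ) * γ^(k-1) * (P * ((k:ℝ)-1)^2) := by
                  apply mul_le_mul_of_nonneg_left hb1 (by positivity)
              _ = (2*(m:ℝ)*Γ*P) * (γ^(k-1) * ((k:ℝ)-1)^2) := by ring
              _ ≤ (2*(m:ℝ)*Γ*P) * (M * β^(k-1)) :=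
                  mul_le_mul_of_nonneg_left hb2 (by positivity)
              _ = (2*(m:ℝ)*Γ*M*P) * β^(k-1) := by ring
          have hslack : F * (1 - β^(k-1-k0)) + (2*(m:ℝ)*Γ*M*P) * β^(k-1)
              ≤ F * (1 - β^(k-k0)) := by
            have hpow1 : β^(k0) * β^(k-1-k0) = β^(k-1) := by rw [← pow_add]; congr 1; omega
            have hpow2 : β^(k-k0) = β^(k-1-k0) * β := by rw [← pow_succ]; congr 1; omega
            have hkey : (2*(m:ℝ)*Γ*M*P) * β^(k-1) = F * β^(k-1-k0) * (1-β) := by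
              rw [hFdef, ← hpow1]
              field_simp
            rw [hkey, hpow2]
            exact le_of_eq (by ring)
          linarith
        have hY : SY k ≤ P * ((k:ℝ)+1)^2 := by
          have ihY := (ih (k-1) (by omega)).1
          rw [hcast1] at ihY
          have ihY' : SY (k-1) ≤ P * (k:ℝ)^2 := by
            calc SY (k-1) ≤ P * (((k:ℝ)-1)+1)^2 := ihY
              _ = P * (k:ℝ)^2 := by ring
          have hyrec := hYrec k (by omega)
          have hFβ : 0 ≤ F * β^(k-k0) := mul_nonneg hF0 (pow_nonneg hβ0.le _)
          have hkk : (1:ℝ) ≤ (k:ℝ) := by exact_mod_cast (by omega : 1 ≤ k)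
          have hck : c0 * (k:ℝ) ≤ P * (k:ℝ) :=
            mul_le_mul_of_nonneg_right hPc0 (by positivity)
          have hPk : P ≤ P * (k:ℝ) := by
            calc P = P * 1 := (mul_one P).symm
              _ ≤ P * (k:ℝ) := mul_le_mul_of_nonneg_left hkk hPpos.le
          have hPk0 : 0 ≤ P * (k:ℝ) := by positivity
          have hid : P * ((k:ℝ)+1)^2 = P*(k:ℝ)^2 + 2*(P*(k:ℝ)) + P := by ring
          have hid2 : F * (1 - β^(k-k0)) = F - F * β^(k-k0) := by ring
          rw [hid2] at hD
          linarith [hD, hyrec, ihY', hFβ, hck, hPk, hPk0, hPcE, hFP]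
        exact ⟨hY, fun _ => hD⟩
  -- conclusion
  refine ⟨(m:ℝ) * (α*Gg), 0, P, ?_⟩
  intro k hk
  have hk1 : 1 ≤ k := by omega
  have h1 := hSQ k hk1
  have h2 := (main (k-1)).1
  have hcast : ((k-1:ℕ):ℝ) = (k:ℝ)-1 := by
    rw [Nat.cast_sub (by omega : 1 ≤ k), Nat.cast_one]
  rw [hcast] at h2
  have h3 : SY (k-1) ≤ P * (k:ℝ)^2 := by
    calc SY (k-1) ≤ P*(((k:ℝ)-1)+1)^2 := h2
      _ = P*(k:ℝ)^2 := by ring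
  calc ∑ i, ‖q k i‖ ≤ SY (k-1) + m*(α*Gg) := h1
    _ ≤ (m:ℝ)*(α*Gg) + 0*(k:ℝ) + P*(k:ℝ)^2 := by linarith
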